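/- arXiv:2303.04493 — 2 statements merged into one kernel-verified Lean document; each statement's English description precedes it below -/
import Mathlib

section
/- Fix a finite group H, a normalized 3-cocycle ω on H valued in k^×, and two sets of classification data (N,κ,ε) and (N',κ',ε'). Then B(N,κ,ε) and B(N',κ',ε') are isomorphic as algebras in Z(Vect_H^ω) if and only if N = N' and there exists a function σ : N → k^× such that κ'(n,m)/κ(n,m) = σ(n)σ(m)/σ(nm) and ε'_h(n)/ε_h(n) = σ(hnh⁻¹)/σ(n) for all n,m ∈ N and h ∈ H (i.e. ε'ε⁻¹ ⊕ κ'κ⁻¹ is a coboundary in the truncated total complex of (H,N,k^×)). -/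
open scoped TensorProduct

namespace DW

/-! ### Cocycle combinatorics -/

section Cocycle

variable {G : Type*} [Group G] {M : Type*} [CommGroup M]

/-- The 3-cocycle condition for a function `ω : G³ → M`. -/
def IsCocycle (ω : G → G → G → M) : Prop :=
  ∀ a b c d : G, ω (a * b) c d * ω a b (c * d) = ω a b c * ω a (b * c) d * ω b c d

/-- `ω` is normalized if it takes the value `1` whenever an argument is `1`. -/
def IsNormalized (ω : G → G → G → M) : Prop :=
  ∀ a b c : G, a = 1 ∨ b = 1 ∨ c = 1 → ω a b c = 1

/-- `τ(h,k)(d) = ω(h,k,d)·ω(hkd(hk)⁻¹,h,k)/ω(h,kdk⁻¹,k)`. -/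
def tauc (ω : G → G → G → M) (h k d : G) : M :=
  ω h k d * ω (h * k * d * (h * k)⁻¹) h k * (ω h (k * d * k⁻¹) k)⁻¹

/-- `γ(h)(d,f) = ω(h,d,f)·ω(hdh⁻¹,hfh⁻¹,h)/ω(hdh⁻¹,h,f)`. -/
def gamc (ω : G → G → G → M) (h d f : G) : M :=
  ω h d f * ω (h * d * h⁻¹) (h * f * h⁻¹) h * (ω (h * d * h⁻¹) h f)⁻¹

end Cocycle

/-! ### Twisted Yetter–Drinfeld modules -/

/-- A twisted Yetter–Drinfeld module structure over `(G, ω)` on a `k`-vector space `M`: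
a `G`-grading (given internally by submodules) together with a twisted `G`-action. -/
structure YDOn (k : Type*) [Field k] {G : Type*} [Group G] [DecidableEq G]
    (ω : G → G → G → kˣ) (M : Type*) [AddCommGroup M] [Module k M] where
  grading : G → Submodule k M
  internal : DirectSum.IsInternal grading
  act : G → M →ₗ[k] M
  act_one : act 1 = LinearMap.id
  act_mem : ∀ (g d : G), ∀ v ∈ grading d, act g v ∈ grading (g * d * g⁻¹)
  act_act : ∀ (h g d : G), ∀ v ∈ grading d,
    act h (act g v) = ((tauc ω h g d : kˣ) : k) • act (h * g) v

section YD

variable {k : Type*} [Field k] {G : Type*} [Group G] [DecidableEq G] {ω : G → G → G → kˣ}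

/-- Morphisms of twisted Yetter–Drinfeld modules: grading-preserving and `G`-equivariant. -/
def IsYDHom {M N : Type*} [AddCommGroup M] [Module k M] [AddCommGroup N] [Module k N]
    (S : YDOn k ω M) (T : YDOn k ω N) (f : M →ₗ[k] N) : Prop :=
  (∀ d : G, ∀ v ∈ S.grading d, f v ∈ T.grading d) ∧
  ∀ g : G, f ∘ₗ S.act g = T.act g ∘ₗ f

/-- `θ` is the ribbon twist map, i.e. `θ(v_d) = d·v_d` on homogeneous elements. -/
def IsTwistMap {M : Type*} [AddCommGroup M] [Module k M] (S : YDOn k ω M)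
    (θ : M →ₗ[k] M) : Prop :=
  ∀ d : G, ∀ v ∈ S.grading d, θ v = S.act d v

/-- `T` is the tensor-product Yetter–Drinfeld structure on `V ⊗ W`:
grading `(V⊗W)_d = ⊕_{ab=d} V_a ⊗ W_b`, action `h·(v_a⊗w_b) = γ(h)(a,b) (h·v ⊗ h·w)`. -/
def IsTensorStruct {V W : Type*} [AddCommGroup V] [Module k V] [AddCommGroup W] [Module k W]
    (SV : YDOn k ω V) (SW : YDOn k ω W) (T : YDOn k ω (V ⊗[k] W)) : Prop :=
  (∀ d : G, T.grading d =
      ⨆ a : G, Submodule.map₂ (TensorProduct.mk k V W) (SV.grading a) (SW.grading (a⁻¹ * d))) ∧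
  ∀ (h a b : G) (v : V) (w : W), v ∈ SV.grading a → w ∈ SW.grading b →
    T.act h (v ⊗ₜ[k] w) = ((gamc ω h a b : kˣ) : k) • (SV.act h v ⊗ₜ[k] SW.act h w)

/-- `c` is the braiding `c_{V,W}(v_g ⊗ w) = (g·w) ⊗ v_g`. -/
def IsBraidingMap {V W : Type*} [AddCommGroup V] [Module k V] [AddCommGroup W] [Module k W]
    (SV : YDOn k ω V) (SW : YDOn k ω W) (c : V ⊗[k] W →ₗ[k] W ⊗[k] V) : Prop :=
  ∀ (g : G) (v : V) (w : W), v ∈ SV.grading g → c (v ⊗ₜ[k] w) = SW.act g w ⊗ₜ[k] v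

/-- `a` is the associator `α((u_g⊗v_h)⊗w_l) = ω(g,h,l)⁻¹ u⊗(v⊗w)`. -/
def IsAssocMap {U V W : Type*} [AddCommGroup U] [Module k U] [AddCommGroup V] [Module k V]
    [AddCommGroup W] [Module k W]
    (SU : YDOn k ω U) (SV : YDOn k ω V) (SW : YDOn k ω W)
    (a : (U ⊗[k] V) ⊗[k] W →ₗ[k] U ⊗[k] (V ⊗[k] W)) : Prop :=
  ∀ (g h l : G) (u : U) (v : V) (w : W),
    u ∈ SU.grading g → v ∈ SV.grading h → w ∈ SW.grading l →
    a ((u ⊗ₜ[k] v) ⊗ₜ[k] w) = (((ω g h l)⁻¹ : kˣ) : k) • (u ⊗ₜ[k] (v ⊗ₜ[k] w))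

/-- `a` is the inverse associator `α⁻¹(u_g⊗(v_h⊗w_l)) = ω(g,h,l) (u⊗v)⊗w`. -/
def IsAssocInvMap {U V W : Type*} [AddCommGroup U] [Module k U] [AddCommGroup V] [Module k V]
    [AddCommGroup W] [Module k W]
    (SU : YDOn k ω U) (SV : YDOn k ω V) (SW : YDOn k ω W)
    (a : U ⊗[k] (V ⊗[k] W) →ₗ[k] (U ⊗[k] V) ⊗[k] W) : Prop :=
  ∀ (g h l : G) (u : U) (v : V) (w : W),
    u ∈ SU.grading g → v ∈ SV.grading h → w ∈ SW.grading l →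
    a (u ⊗ₜ[k] (v ⊗ₜ[k] w)) = ((ω g h l : kˣ) : k) • ((u ⊗ₜ[k] v) ⊗ₜ[k] w)

/-- The unit object: `k` concentrated in degree `1` with trivial action. -/
def IsUnitStruct (S : YDOn k ω k) : Prop :=
  S.grading 1 = ⊤ ∧ (∀ d : G, d ≠ 1 → S.grading d = ⊥) ∧ ∀ g : G, S.act g = LinearMap.id

end YD

/-! ### The induction functor -/

section Induced

variable {k : Type*} [Field k] {G : Type*} [Group G] [DecidableEq G]
variable (ω : G → G → G → kˣ) (H : Subgroup G)

/-- Restriction of a 3-cocycle on `G` to a subgroup `H`. -/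
def resCocycle : ↥H → ↥H → ↥H → kˣ := fun a b c => ω ↑a ↑b ↑c

variable {V : Type*} [AddCommGroup V] [Module k V]

/-- The relations `g h ⊗ v_d = τ(g,h)(d)⁻¹ g ⊗ (h·v_d)` defining `I(V) = kG ⊗_{kH} V`. -/
noncomputable def indRel (S : YDOn k (resCocycle ω H) V) : Submodule k (G →₀ V) :=
  Submodule.span k
    {x | ∃ (g : G) (h d : ↥H) (v : V), v ∈ S.grading d ∧
      x = Finsupp.single (g * ↑h) v
        - (((tauc ω g ↑h ↑d)⁻¹ : kˣ) : k) • Finsupp.single g (S.act h v)}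

/-- The carrier of the induced module `I(V)`. -/
abbrev IndCarrier (S : YDOn k (resCocycle ω H) V) : Type _ :=
  (G →₀ V) ⧸ indRel ω H S

/-- The generator `g ⊗ v` of `I(V)`. -/
noncomputable def jgen (S : YDOn k (resCocycle ω H) V) (g : G) (v : V) : IndCarrier ω H S :=
  Submodule.Quotient.mk (Finsupp.single g v)

/-- `T` is the twisted Yetter–Drinfeld structure of the induced module `I(V)`:
`deg (g⊗v_e) = g e g⁻¹` and `c ⊳ (g⊗v_e) = τ(c,g)(e) (cg ⊗ v_e)`. -/
def IsIndStruct (S : YDOn k (resCocycle ω H) V) (T : YDOn k ω (IndCarrier ω H S)) : Prop :=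
  (∀ d : G, T.grading d = Submodule.span k
      {x | ∃ (g : G) (e : ↥H) (v : V), v ∈ S.grading e ∧ g * ↑e * g⁻¹ = d ∧
        x = jgen ω H S g v}) ∧
  ∀ (c g : G) (e : ↥H) (v : V), v ∈ S.grading e →
    T.act c (jgen ω H S g v) = ((tauc ω c g ↑e : kˣ) : k) • jgen ω H S (c * g) v

/-- `F` is the induced morphism `I(f)` of a morphism `f`. -/
def IsIndMap {W : Type*} [AddCommGroup W] [Module k W]
    (S : YDOn k (resCocycle ω H) V) (S' : YDOn k (resCocycle ω H) W)
    (f : V →ₗ[k] W) (F : IndCarrier ω H S →ₗ[k] IndCarrier ω H S') : Prop :=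
  ∀ (g : G) (v : V), F (jgen ω H S g v) = jgen ω H S' g (f v)

/-- `ν` is the oplax structure map
`ν(g ⊗ (a_d ⊗ b_f)) = γ(g)(d,f) (g⊗a) ⊗ (g⊗b)`. -/
def IsNuMap {A B : Type*} [AddCommGroup A] [Module k A] [AddCommGroup B] [Module k B]
    (SA : YDOn k (resCocycle ω H) A) (SB : YDOn k (resCocycle ω H) B)
    (SAB : YDOn k (resCocycle ω H) (A ⊗[k] B))
    (ν : IndCarrier ω H SAB →ₗ[k] IndCarrier ω H SA ⊗[k] IndCarrier ω H SB) : Prop :=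
  ∀ (g : G) (d f : ↥H) (a : A) (b : B), a ∈ SA.grading d → b ∈ SB.grading f →
    ν (jgen ω H SAB g (a ⊗ₜ[k] b)) =
      ((gamc ω g ↑d ↑f : kˣ) : k) • (jgen ω H SA g a ⊗ₜ[k] jgen ω H SB g b)

/-- `μ` is the lax structure map: zero across distinct cosets and
`μ((g⊗a_d) ⊗ (g⊗b_f)) = γ(g)(d,f)⁻¹ (g ⊗ (a⊗b))`. -/
def IsMuMap {A B : Type*} [AddCommGroup A] [Module k A] [AddCommGroup B] [Module k B]
    (SA : YDOn k (resCocycle ω H) A) (SB : YDOn k (resCocycle ω H) B)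
    (SAB : YDOn k (resCocycle ω H) (A ⊗[k] B))
    (μ : IndCarrier ω H SA ⊗[k] IndCarrier ω H SB →ₗ[k] IndCarrier ω H SAB) : Prop :=
  (∀ g g' : G, g⁻¹ * g' ∉ H → ∀ (a : A) (b : B),
      μ (jgen ω H SA g a ⊗ₜ[k] jgen ω H SB g' b) = 0) ∧
  ∀ (g : G) (d f : ↥H) (a : A) (b : B), a ∈ SA.grading d → b ∈ SB.grading f →
    μ (jgen ω H SA g a ⊗ₜ[k] jgen ω H SB g b) =
      (((gamc ω g ↑d ↑f)⁻¹ : kˣ) : k) • jgen ω H SAB g (a ⊗ₜ[k] b)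

/-- The counit `I(1) → 1`, `g ⊗ c ↦ c`. -/
def IsCounitMap (S1 : YDOn k (resCocycle ω H) k)
    (ε : IndCarrier ω H S1 →ₗ[k] k) : Prop :=
  ∀ (g : G) (c : k), ε (jgen ω H S1 g c) = c

/-- The unit `1 → I(1)`, `1 ↦ ∑ᵢ gᵢ ⊗ 1` over a set `R` of left coset representatives. -/
def IsUnitMap (S1 : YDOn k (resCocycle ω H) k) (R : Finset G)
    (η : k →ₗ[k] IndCarrier ω H S1) : Prop :=
  (∀ g : G, ∃! r, r ∈ R ∧ g⁻¹ * r ∈ H) ∧ η 1 = ∑ r ∈ R, jgen ω H S1 r (1 : k)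

end Induced

/-! ### The coset algebra and classification data -/

section AH

variable (k : Type*) [Field k] {G : Type*} [Group G]

/-- The twisted action of `G` on functions on `G/H` : `(c·f)(x) = f(c⁻¹x)`. -/
def cosetAct (H : Subgroup G) (c : G) : ((G ⧸ H) → k) →ₗ[k] ((G ⧸ H) → k) :=
  LinearMap.funLeft k k fun x => c⁻¹ • x

/-- Basis element `e_n` of the twisted group algebra `B(N,κ,ε)`. -/
noncomputable def bGen {H : Type*} [Group H] (N : Subgroup H) (n : ↥N) : ↥N →₀ k :=
  Finsupp.single n 1

end AH

section ClassData

variable {H : Type*} [Group H] {M : Type*} [CommGroup M]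

/-- The conditions on the classification data `(N, κ, ε)` from Davydov–Simmons. -/
def ClassData (ω : H → H → H → M) (N : Subgroup H) (κ ε : H → H → M) : Prop :=
  (∀ n ∈ N, κ n 1 = 1 ∧ κ 1 n = 1) ∧
  (∀ n ∈ N, ∀ m ∈ N, ∀ l ∈ N,
      ω n m l = κ n m * (κ m l)⁻¹ * κ (n * m) l * (κ n (m * l))⁻¹) ∧
  (∀ h g : H, ∀ n ∈ N, tauc ω h g n = ε h (g * n * g⁻¹) * ε g n * (ε (h * g) n)⁻¹) ∧
  (∀ h : H, ∀ n ∈ N, ∀ m ∈ N,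
      gamc ω h n m
        = ε h (n * m) * (ε h n)⁻¹ * (ε h m)⁻¹ * κ (h * n * h⁻¹) (h * m * h⁻¹) * (κ n m)⁻¹) ∧
  ∀ n ∈ N, ∀ m ∈ N, κ (n * m * n⁻¹) n = ε n m * κ n m

end ClassData

section BStruct

variable {k : Type*} [Field k] {H : Type*} [Group H] [DecidableEq H]

/-- The twisted Yetter–Drinfeld structure of `B(N,κ,ε)`:
`e_n` has degree `n` and `h·e_n = ε_h(n) e_{hnh⁻¹}`. -/
def IsBStruct (ω : H → H → H → kˣ) (N : Subgroup H) (hN : N.Normal) (ε : H → H → kˣ)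
    (S : YDOn k ω (↥N →₀ k)) : Prop :=
  (∀ d : H, S.grading d = Submodule.span k {x | ∃ n : ↥N, ↑n = d ∧ x = bGen k N n}) ∧
  ∀ (h : H) (n : ↥N), S.act h (bGen k N n) =
    ((ε h ↑n : kˣ) : k) • bGen k N ⟨h * ↑n * h⁻¹, hN.conj_mem ↑n n.2 h⟩

/-- The multiplication of `B(N,κ,ε)`: `e_n e_m = κ(n,m)⁻¹ e_{nm}`. -/
def IsBMul (N : Subgroup H) (κ : H → H → kˣ)
    (mulB : (↥N →₀ k) ⊗[k] (↥N →₀ k) →ₗ[k] (↥N →₀ k)) : Prop :=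
  ∀ n m : ↥N, mulB (bGen k N n ⊗ₜ[k] bGen k N m) =
    (((κ ↑n ↑m)⁻¹ : kˣ) : k) • bGen k N (n * m)

end BStruct

/-! ### Algebras, étale algebras and Frobenius algebras in the category -/

section Algebras

variable {k : Type*} [Field k] {G : Type*} [Group G] [DecidableEq G] {ω : G → G → G → kˣ}
variable {M : Type*} [AddCommGroup M] [Module k M]

/-- `(M, mulM, uM)` is a connected étale (= connected commutative separable) algebra in
`Z(Vect_G^ω)`. -/
def IsConnectedEtale (T : YDOn k ω M) (mulM : M ⊗[k] M →ₗ[k] M) (uM : k →ₗ[k] M) : Prop :=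
  -- the multiplication is a morphism in the category
  (∃ Tt : YDOn k ω (M ⊗[k] M), IsTensorStruct T T Tt ∧ IsYDHom Tt T mulM) ∧
  -- the unit is a morphism in the category
  (uM 1 ∈ T.grading 1) ∧ (∀ g : G, T.act g (uM 1) = uM 1) ∧
  -- unitality
  (∀ x : M, mulM (uM 1 ⊗ₜ[k] x) = x ∧ mulM (x ⊗ₜ[k] uM 1) = x) ∧
  -- associativity (with respect to the associator of the category)
  (∃ a, IsAssocMap T T T a ∧
      mulM ∘ₗ TensorProduct.map mulM LinearMap.id
        = mulM ∘ₗ TensorProduct.map LinearMap.id mulM ∘ₗ a) ∧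
  -- commutativity
  (∃ c, IsBraidingMap T T c ∧ mulM ∘ₗ c = mulM) ∧
  -- separability
  (∃ (Δ' : M →ₗ[k] M ⊗[k] M) (Tt : YDOn k ω (M ⊗[k] M))
      (a : (M ⊗[k] M) ⊗[k] M →ₗ[k] M ⊗[k] (M ⊗[k] M))
      (a' : M ⊗[k] (M ⊗[k] M) →ₗ[k] (M ⊗[k] M) ⊗[k] M),
      IsTensorStruct T T Tt ∧ IsAssocMap T T T a ∧ IsAssocInvMap T T T a' ∧
      IsYDHom T Tt Δ' ∧ mulM ∘ₗ Δ' = LinearMap.id ∧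
      TensorProduct.map LinearMap.id mulM ∘ₗ a ∘ₗ TensorProduct.map Δ' LinearMap.id
        = Δ' ∘ₗ mulM ∧
      Δ' ∘ₗ mulM
        = TensorProduct.map mulM LinearMap.id ∘ₗ a' ∘ₗ TensorProduct.map LinearMap.id Δ') ∧
  -- connectedness : Hom(1, M) is one-dimensional
  Module.finrank k
    ↥(T.grading 1 ⊓ ⨅ g : G, LinearMap.eqLocus (T.act g) (LinearMap.id : M →ₗ[k] M)) = 1

/-- `(M, mulM, uM)` is a rigid Frobenius (= connected commutative special Frobenius)
algebra in `Z(Vect_G^ω)`. -/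
def IsRigidFrobenius (T : YDOn k ω M) (mulM : M ⊗[k] M →ₗ[k] M) (uM : k →ₗ[k] M) : Prop :=
  IsConnectedEtale T mulM uM ∧
  ∃ (Δ : M →ₗ[k] M ⊗[k] M) (εM : M →ₗ[k] k),
    -- Δ and ε are morphisms in the category
    (∃ Tt : YDOn k ω (M ⊗[k] M), IsTensorStruct T T Tt ∧ IsYDHom T Tt Δ) ∧
    (∀ g : G, εM ∘ₗ T.act g = εM) ∧ (∀ d : G, d ≠ 1 → ∀ v ∈ T.grading d, εM v = 0) ∧
    -- coassociativity and counitality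
    (∀ a, IsAssocMap T T T a →
        a ∘ₗ TensorProduct.map Δ LinearMap.id ∘ₗ Δ = TensorProduct.map LinearMap.id Δ ∘ₗ Δ) ∧
    (TensorProduct.lid k M).toLinearMap ∘ₗ TensorProduct.map εM LinearMap.id ∘ₗ Δ
      = LinearMap.id ∧
    (TensorProduct.rid k M).toLinearMap ∘ₗ TensorProduct.map LinearMap.id εM ∘ₗ Δ
      = LinearMap.id ∧
    -- the Frobenius compatibility
    (∀ a a', IsAssocMap T T T a → IsAssocInvMap T T T a' →
        TensorProduct.map mulM LinearMap.id ∘ₗ a' ∘ₗ TensorProduct.map LinearMap.id Δ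
          = Δ ∘ₗ mulM ∧
        Δ ∘ₗ mulM = TensorProduct.map LinearMap.id mulM ∘ₗ a ∘ₗ TensorProduct.map Δ LinearMap.id) ∧
    -- specialness
    (∃ β : k, β ≠ 0 ∧ mulM ∘ₗ Δ = β • LinearMap.id) ∧
    ∃ β1 : k, β1 ≠ 0 ∧ εM (uM 1) = β1

/-- `(V, ρ)` is a local right module over the commutative algebra `(A, mulA, u)`. -/
def IsLocModule {A V : Type*} [AddCommGroup A] [Module k A] [AddCommGroup V] [Module k V]
    (SA : YDOn k ω A) (mulA : A ⊗[k] A →ₗ[k] A) (u : A)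
    (SV : YDOn k ω V) (ρ : V →ₗ[k] A →ₗ[k] V) : Prop :=
  (∀ d e : G, ∀ v ∈ SV.grading d, ∀ a ∈ SA.grading e, ρ v a ∈ SV.grading (d * e)) ∧
  (∀ v : V, ρ v u = v) ∧
  (∀ (d e f : G) (v : V) (a b : A), v ∈ SV.grading d → a ∈ SA.grading e → b ∈ SA.grading f →
      ρ (ρ v a) b = (((ω d e f)⁻¹ : kˣ) : k) • ρ v (mulA (a ⊗ₜ[k] b))) ∧
  (∀ (h d e : G) (v : V) (a : A), v ∈ SV.grading d → a ∈ SA.grading e →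
      SV.act h (ρ v a) = ((gamc ω h d e : kˣ) : k) • ρ (SV.act h v) (SA.act h a)) ∧
  ∀ (d e : G) (v : V) (a : A), v ∈ SV.grading d → a ∈ SA.grading e →
    ρ v a = ρ (SV.act (d * e * d⁻¹) v) (SA.act d a)

/-- The submodule of `X ⊗ Y` which is divided out to form the relative tensor product
`X ⊗_A Y` over a commutative algebra `A` (the left action on `Y` is obtained from the
right action through the braiding). -/
def relLoc {A X Y : Type*} [AddCommGroup A] [Module k A] [AddCommGroup X] [Module k X]
    [AddCommGroup Y] [Module k Y]
    (SA : YDOn k ω A) (SY : YDOn k ω Y)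
    (ρX : X →ₗ[k] A →ₗ[k] X) (ρY : Y →ₗ[k] A →ₗ[k] Y) : Submodule k (X ⊗[k] Y) :=
  Submodule.span k
    {t | ∃ (e : G) (a : A) (x : X) (y : Y), a ∈ SA.grading e ∧
      t = ρX x a ⊗ₜ[k] y - x ⊗ₜ[k] ρY (SY.act e y) a}

end Algebras

end DW

open DW

section AuxLemmas

variable {k : Type*} [Field k] {H : Type*} [Group H]

lemma bGen_ne_zero (N : Subgroup H) (n : ↥N) : bGen k N n ≠ 0 := by
  simp [bGen, Finsupp.single_eq_zero]

lemma bGen_smul_cancel {N : Subgroup H} {n : ↥N} {a b : k}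
    (h : a • bGen k N n = b • bGen k N n) : a = b := by
  have h2 := DFunLike.congr_fun h n
  simpa [bGen] using h2

lemma single_eq_smul_bGen (N : Subgroup H) (n : ↥N) (a : k) :
    Finsupp.single n a = a • bGen k N n := by
  simp [bGen, Finsupp.smul_single]

end AuxLemmas

/-- Proposition 4.10: for two sets of classification data `(N,κ,ε)` and
`(N',κ',ε')` for `(H,ω)`, the algebras `B(N,κ,ε)` and `B(N',κ',ε')` are isomorphic as
algebras in `Z(Vect_H^ω)` if and only if `N = N'` and there is `σ : N → k^×` with
`κ'(n,m)/κ(n,m) = σ(n)σ(m)/σ(nm)` and `ε'_h(n)/ε_h(n) = σ(hnh⁻¹)/σ(n)`, i.e.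
`ε'ε⁻¹ ⊕ κ'κ⁻¹` is a coboundary in the truncated total complex of `(H,N,k^×)`. -/
theorem B_isomorphism_classification {k : Type*} [Field k] [IsAlgClosed k] {H : Type*}
    [Group H] [Finite H] [DecidableEq H] (ω : H → H → H → kˣ)
    (hω : IsCocycle ω) (hnorm : IsNormalized ω)
    (N N' : Subgroup H) (hN : N.Normal) (hN' : N'.Normal)
    (κ ε κ' ε' : H → H → kˣ)
    (hdata : ClassData ω N κ ε) (hdata' : ClassData ω N' κ' ε')
    (SB : YDOn k ω (↥N →₀ k)) (hSB : IsBStruct ω N hN ε SB)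
    (SB' : YDOn k ω (↥N' →₀ k)) (hSB' : IsBStruct ω N' hN' ε' SB')
    (mulB : (↥N →₀ k) ⊗[k] (↥N →₀ k) →ₗ[k] (↥N →₀ k)) (hmulB : IsBMul N κ mulB)
    (mulB' : (↥N' →₀ k) ⊗[k] (↥N' →₀ k) →ₗ[k] (↥N' →₀ k)) (hmulB' : IsBMul N' κ' mulB') :
    (∃ φ : (↥N →₀ k) →ₗ[k] (↥N' →₀ k), Function.Bijective φ ∧ IsYDHom SB SB' φ ∧
        φ ∘ₗ mulB = mulB' ∘ₗ TensorProduct.map φ φ ∧ φ (bGen k N 1) = bGen k N' 1) ↔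
      (N = N' ∧ ∃ σ : H → kˣ,
        (∀ n ∈ N, ∀ m ∈ N, κ' n m * σ (n * m) = κ n m * (σ n * σ m)) ∧
        ∀ h : H, ∀ n ∈ N, ε' h n * σ n = ε h n * σ (h * n * h⁻¹)) := by
  classical
  constructor
  · rintro ⟨φ, hbij, ⟨hgr, hact⟩, hmul, hunit⟩
    have hb_mem : ∀ n : ↥N, bGen k N n ∈ SB.grading ↑n := by
      intro n
      rw [hSB.1]
      exact Submodule.subset_span ⟨n, rfl, rfl⟩
    have hφ_ne : ∀ n : ↥N, φ (bGen k N n) ≠ 0 := by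
      intro n h0
      exact bGen_ne_zero N n (hbij.1 (by rw [h0, map_zero]))
    have hle : N ≤ N' := by
      intro n hn
      by_contra hn'
      have h1 : φ (bGen k N ⟨n, hn⟩) ∈ SB'.grading n := hgr n _ (hb_mem ⟨n, hn⟩)
      rw [hSB'.1] at h1
      have hset : {x : ↥N' →₀ k | ∃ m : ↥N', ↑m = n ∧ x = bGen k N' m} = ∅ := by
        ext x
        simp only [Set.mem_setOf_eq, Set.mem_empty_iff_false, iff_false, not_exists]
        rintro m ⟨hm, -⟩
        exact hn' (hm ▸ m.2)
      rw [hset, Submodule.span_empty, Submodule.mem_bot] at h1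
      exact hφ_ne _ h1
    have hge : N' ≤ N := by
      intro m hm
      by_contra hmN
      have hz : ∀ v, φ v ⟨m, hm⟩ = 0 := by
        intro v
        induction v using Finsupp.induction_linear with
        | zero => simp
        | add f g hf hg => rw [map_add]; simp [hf, hg]
        | single n a =>
          have h1 : φ (bGen k N n) ∈ SB'.grading ↑n := hgr ↑n _ (hb_mem n)
          rw [hSB'.1] at h1
          have hle2 : Submodule.span k
              {x : ↥N' →₀ k | ∃ m' : ↥N', ↑m' = (↑n : H) ∧ x = bGen k N' m'}
              ≤ LinearMap.ker (Finsupp.lapply (⟨m, hm⟩ : ↥N')) := by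
            rw [Submodule.span_le]
            rintro x ⟨m', hm', rfl⟩
            have hne : m' ≠ (⟨m, hm⟩ : ↥N') := by
              intro he
              apply hmN
              have : (↑m' : H) = m := by rw [he]
              rw [← this, hm']
              exact n.2
            simp only [SetLike.mem_coe, LinearMap.mem_ker, Finsupp.lapply_apply, bGen]
            exact Finsupp.single_eq_of_ne hne.symm
          have h0 : φ (bGen k N n) ⟨m, hm⟩ = 0 := hle2 h1
          rw [single_eq_smul_bGen, map_smul]
          simp [h0]
      obtain ⟨v, hv⟩ := hbij.2 (bGen k N' ⟨m, hm⟩)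
      have hcontra := hz v
      rw [hv] at hcontra
      simp [bGen] at hcontra
    have hNN' : N = N' := le_antisymm hle hge
    subst hNN'
    have hc : ∀ n : ↥N, ∃ a : k, φ (bGen k N n) = a • bGen k N n := by
      intro n
      have h1 : φ (bGen k N n) ∈ SB'.grading ↑n := hgr ↑n _ (hb_mem n)
      rw [hSB'.1] at h1
      have hset : {x : ↥N →₀ k | ∃ m : ↥N, ↑m = (↑n : H) ∧ x = bGen k N m}
          = {bGen k N n} := by
        ext x
        constructor
        · rintro ⟨m', hm', rfl⟩
          cases Subtype.ext hm'
          rfl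
        · rintro rfl
          exact ⟨n, rfl, rfl⟩
      rw [hset] at h1
      obtain ⟨a, ha⟩ := Submodule.mem_span_singleton.mp h1
      exact ⟨a, ha.symm⟩
    choose c hcval using hc
    have hcne : ∀ n : ↥N, c n ≠ 0 := by
      intro n h0
      apply hφ_ne n
      rw [hcval n, h0, zero_smul]
    refine ⟨rfl, fun x => if h : x ∈ N then Units.mk0 (c ⟨x, h⟩) (hcne _) else 1, ?_, ?_⟩
    · intro n hn m hm
      have hnm := N.mul_mem hn hm
      have h := DFunLike.congr_fun hmul (bGen k N ⟨n, hn⟩ ⊗ₜ[k] bGen k N ⟨m, hm⟩)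
      simp only [LinearMap.comp_apply, TensorProduct.map_tmul] at h
      rw [hmulB ⟨n, hn⟩ ⟨m, hm⟩, map_smul, hcval, hcval, hcval,
        ← TensorProduct.smul_tmul', TensorProduct.tmul_smul, map_smul, map_smul,
        hmulB' ⟨n, hn⟩ ⟨m, hm⟩] at h
      simp only [smul_smul] at h
      have hk := bGen_smul_cancel h
      apply Units.ext
      simp only [Units.val_mul, dif_pos hn, dif_pos hm, dif_pos hnm, Units.val_mk0]
      have hκ : ((κ n m : kˣ) : k) ≠ 0 := Units.ne_zero _
      have hκ' : ((κ' n m : kˣ) : k) ≠ 0 := Units.ne_zero _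
      rw [Units.val_inv_eq_inv_val, Units.val_inv_eq_inv_val] at hk
      field_simp at hk
      linear_combination hk
    · intro g n hn
      have h := DFunLike.congr_fun (hact g) (bGen k N ⟨n, hn⟩)
      simp only [LinearMap.comp_apply] at h
      rw [hSB.2 g ⟨n, hn⟩, map_smul, hcval, hcval, map_smul, hSB'.2 g ⟨n, hn⟩] at h
      simp only [smul_smul] at h
      have hgn := hN.conj_mem n hn g
      have hk : ((ε g n : kˣ) : k) * c ⟨g * n * g⁻¹, hgn⟩
          = c ⟨n, hn⟩ * ((ε' g n : kˣ) : k) := bGen_smul_cancel h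
      apply Units.ext
      simp only [Units.val_mul, dif_pos hn, dif_pos hgn, Units.val_mk0]
      linear_combination -hk
  · rintro ⟨rfl, σ, h1, h2⟩
    have hσ1 : σ 1 = 1 := by
      have h := h1 1 N.one_mem 1 N.one_mem
      rw [mul_one, (hdata.1 1 N.one_mem).1, (hdata'.1 1 N.one_mem).1, one_mul, one_mul] at h
      have h' : σ 1 * 1 = σ 1 * σ 1 := by rw [mul_one]; exact h
      exact (mul_left_cancel h').symm
    set φ : (↥N →₀ k) →ₗ[k] (↥N →₀ k) :=
      Finsupp.lsum (R := k) k (fun n : ↥N => ((σ ↑n : k) • Finsupp.lsingle n)) with hφdef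
    set ψ : (↥N →₀ k) →ₗ[k] (↥N →₀ k) :=
      Finsupp.lsum (R := k) k (fun n : ↥N => ((((σ ↑n)⁻¹ : kˣ) : k) • Finsupp.lsingle n))
      with hψdef
    have hφb : ∀ n : ↥N, φ (bGen k N n) = (σ ↑n : k) • bGen k N n := by
      intro n
      simp [hφdef, bGen, Finsupp.lsum_single, Finsupp.smul_single]
    have hφs : ∀ (n : ↥N) (a : k), φ (Finsupp.single n a) = (σ ↑n : k) • Finsupp.single n a := by
      intro n a
      simp [hφdef, Finsupp.lsum_single, Finsupp.smul_single]
    have hψs : ∀ (n : ↥N) (a : k),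
        ψ (Finsupp.single n a) = (((σ ↑n)⁻¹ : kˣ) : k) • Finsupp.single n a := by
      intro n a
      simp [hψdef, Finsupp.lsum_single, Finsupp.smul_single]
    refine ⟨φ, ?_, ⟨?_, ?_⟩, ?_, ?_⟩
    · have inv1 : ∀ v, ψ (φ v) = v := by
        intro v
        induction v using Finsupp.induction_linear with
        | zero => simp
        | add f g hf hg => rw [map_add, map_add, hf, hg]
        | single n a =>
          rw [hφs, map_smul, hψs, smul_smul, Units.mul_inv, one_smul]
      have inv2 : ∀ v, φ (ψ v) = v := by
        intro v
        induction v using Finsupp.induction_linear with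
        | zero => simp
        | add f g hf hg => rw [map_add, map_add, hf, hg]
        | single n a =>
          rw [hψs, map_smul, hφs, smul_smul, Units.inv_mul, one_smul]
      exact Function.bijective_iff_has_inverse.mpr ⟨ψ, inv1, inv2⟩
    · intro d v hv
      rw [hSB.1] at hv
      rw [hSB'.1]
      induction hv using Submodule.span_induction with
      | mem x hx =>
        obtain ⟨n, hd, rfl⟩ := hx
        rw [hφb]
        exact Submodule.smul_mem _ _ (Submodule.subset_span ⟨n, hd, rfl⟩)
      | zero => rw [map_zero]; exact Submodule.zero_mem _
      | add x y hx hy ihx ihy => rw [map_add]; exact Submodule.add_mem _ ihx ihy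
      | smul a x hx ihx => rw [map_smul]; exact Submodule.smul_mem _ _ ihx
    · intro g
      apply Finsupp.lhom_ext
      intro n a
      simp only [LinearMap.comp_apply]
      rw [single_eq_smul_bGen, map_smul, map_smul, hSB.2 g n]
      simp only [map_smul]
      rw [hφb, hφb]
      simp only [map_smul]
      rw [hSB'.2 g n]
      simp only [smul_smul]
      have key := congrArg Units.val (h2 g ↑n n.2)
      push_cast at key
      congr 1
      linear_combination -a * key
    · apply TensorProduct.ext'
      intro x y
      induction x using Finsupp.induction_linear with
      | zero => simp
      | add f g hf hg =>
        simp only [LinearMap.comp_apply, TensorProduct.add_tmul, TensorProduct.map_tmul,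
          map_add] at hf hg ⊢
        rw [hf, hg]
      | single n a =>
        induction y using Finsupp.induction_linear with
        | zero => simp
        | add f g hf hg =>
          simp only [LinearMap.comp_apply, TensorProduct.tmul_add, TensorProduct.map_tmul,
            map_add] at hf hg ⊢
          rw [hf, hg]
        | single m b =>
          have hL : φ (mulB (Finsupp.single n a ⊗ₜ[k] Finsupp.single m b))
              = (a * b * (((κ ↑n ↑m)⁻¹ : kˣ) : k) * (σ ↑(n * m) : k)) • bGen k N (n * m) := by
            rw [single_eq_smul_bGen, single_eq_smul_bGen, ← TensorProduct.smul_tmul',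
              TensorProduct.tmul_smul]
            simp only [map_smul]
            rw [hmulB n m]
            simp only [map_smul]
            rw [hφb]
            simp only [smul_smul]
            congr 1
            ring
          have hR : mulB' (φ (Finsupp.single n a) ⊗ₜ[k] φ (Finsupp.single m b))
              = (a * b * (σ ↑n : k) * (σ ↑m : k) * (((κ' ↑n ↑m)⁻¹ : kˣ) : k))
                  • bGen k N (n * m) := by
            rw [hφs, hφs, single_eq_smul_bGen, single_eq_smul_bGen]
            simp only [smul_smul]
            rw [← TensorProduct.smul_tmul', TensorProduct.tmul_smul]
            simp only [map_smul]
            rw [hmulB' n m]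
            simp only [smul_smul]
            congr 1
            ring
          simp only [LinearMap.comp_apply, TensorProduct.map_tmul]
          rw [hL, hR]
          congr 1
          have key := congrArg Units.val (h1 ↑n n.2 ↑m m.2)
          push_cast at key
          have hκ : ((κ ↑n ↑m : kˣ) : k) ≠ 0 := Units.ne_zero _
          have hκ' : ((κ' ↑n ↑m : kˣ) : k) ≠ 0 := Units.ne_zero _
          rw [Units.val_inv_eq_inv_val, Units.val_inv_eq_inv_val]
          push_cast
          field_simp
          linear_combination a * b * key
    · rw [hφb]
      simp [hσ1]
end

section
/- Let m ≥ 1, G = D_{2m+1}, p an integer, d a divisor of 2m+1, f a divisor of (2m+1)/d, y = (2m+1)/(df), and let N = ⟨r^{df}⟩ ≅ Z_y be the cyclic subgroup generated by r^{df}. Then the restriction of ω_p to N is identically 1 (i.e. ω_p(a,b,c) = 1 for all a,b,c ∈ N) if and only if p ≡ 0 (mod y). -/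
namespace DW

/-- The reflection part `g₀ ∈ {0,1}` of an element `g = s^{g₀} r^{g₁}` of a dihedral group. -/
def dg0 {n : ℕ} : DihedralGroup n → ℕ
  | .r _ => 0
  | .sr _ => 1

/-- The rotation part `g₁ ∈ {-m,…,m}` of an element `g = s^{g₀} r^{g₁}` of `D_{2m+1}`. -/
def dg1 {n : ℕ} [NeZero n] : DihedralGroup n → ℤ
  | .r i => i.valMinAbs
  | .sr i => i.valMinAbs

/-- `[x]`: the representative of `x` modulo `n` lying in `{-(n-1)/2, …, (n-1)/2}` (for odd `n`). -/
def brkt (n : ℕ) [NeZero n] (x : ℤ) : ℤ := ((x : ZMod n)).valMinAbs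

/-- The `U(1)`-valued normalized 3-cocycle `ω_p` on the odd dihedral group `D_{2m+1}`:
`ω_p(a,b,c) = exp( (2πip/(2m+1)²)·( (−1)^{b₀+c₀} a₁ ((−1)^{c₀}b₁ + c₁ − [(−1)^{c₀}b₁ + c₁])
+ ((2m+1)²/2) a₀b₀c₀ ) )`. -/
noncomputable def omegaP (m : ℕ) (p : ℤ) (a b c : DihedralGroup (2 * m + 1)) : ℂ :=
  Complex.exp ((2 * Real.pi * Complex.I * (p : ℂ)) / ((2 * m + 1 : ℂ) ^ 2) *
    ((-1 : ℂ) ^ (dg0 b + dg0 c) * (dg1 a : ℂ) *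
        (((((-1 : ℤ) ^ dg0 c) * dg1 b + dg1 c
            - brkt (2 * m + 1) (((-1 : ℤ) ^ dg0 c) * dg1 b + dg1 c) : ℤ) : ℂ))
      + ((2 * m + 1 : ℂ) ^ 2 / 2) * ((dg0 a * dg0 b * dg0 c : ℕ) : ℂ)))

end DW

open DW

lemma r_zpow (n : ℕ) (c : ZMod n) (k : ℤ) :
    (DihedralGroup.r c) ^ k = DihedralGroup.r ((k : ZMod n) * c) := by
  have hinv : (DihedralGroup.r c)⁻¹ = DihedralGroup.r (-c) := by
    apply inv_eq_of_mul_eq_one_right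
    rw [DihedralGroup.r_mul_r, add_neg_cancel, DihedralGroup.one_def]
  induction k using Int.induction_on with
  | zero => simp [DihedralGroup.one_def, -DihedralGroup.r_zero]
  | succ k ih => rw [zpow_add_one, ih, DihedralGroup.r_mul_r]; push_cast; ring_nf
  | pred k ih => rw [zpow_sub_one, ih, hinv, DihedralGroup.r_mul_r]; push_cast; ring_nf

lemma omegaP_r (m : ℕ) (p : ℤ) (ia ib ic : ZMod (2*m+1)) :
    omegaP m p (.r ia) (.r ib) (.r ic) =
    Complex.exp ((2*Real.pi*Complex.I*(p:ℂ))/(((2*m+1 : ℕ):ℂ)^2) *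
      (((ia.valMinAbs * (ib.valMinAbs + ic.valMinAbs
          - brkt (2*m+1) (ib.valMinAbs + ic.valMinAbs)) : ℤ) : ℂ))) := by
  simp only [omegaP, dg0, dg1, pow_zero, one_mul, Nat.mul_zero, Nat.zero_mul, Nat.cast_zero,
    mul_zero, zero_mul, add_zero]
  push_cast
  ring_nf

lemma exp_aux (n : ℕ) (hn : (n:ℂ) ≠ 0) (p X : ℤ) :
    Complex.exp ((2*Real.pi*Complex.I*(p:ℂ))/((n:ℂ)^2) * ((X:ℤ):ℂ)) = 1 ↔ ((n:ℤ)^2 ∣ p * X) := by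
  rw [Complex.exp_eq_one_iff]
  have h2 : (2*Real.pi*Complex.I : ℂ) ≠ 0 := by
    simpa [mul_assoc] using Complex.two_pi_I_ne_zero
  constructor
  · rintro ⟨k, hk⟩
    refine ⟨k, ?_⟩
    have hC : ((p * X : ℤ) : ℂ) = (((n:ℤ)^2 * k : ℤ) : ℂ) := by
      have h : (2*Real.pi*Complex.I) * ((p * X : ℤ) : ℂ)
          = (2*Real.pi*Complex.I) * (((n:ℤ)^2 * k : ℤ) : ℂ) := by
        field_simp at hk
        push_cast
        linear_combination (2*Real.pi*Complex.I) * hk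
      exact mul_left_cancel₀ h2 h
    exact_mod_cast hC
  · rintro ⟨k, hk⟩
    refine ⟨k, ?_⟩
    have h : ((p * X : ℤ) : ℂ) = (((n:ℤ)^2 * k : ℤ) : ℂ) := by rw [hk]
    push_cast at h
    field_simp
    linear_combination h


/-- Section 4.6: let `G = D_{2m+1}`, `d ∣ 2m+1`, `f ∣ (2m+1)/d`,
`y = (2m+1)/(df)` and `N = ⟨r^{df}⟩ ≅ ℤ_y`. The restriction of the 3-cocycle `ω_p` to `N`
is identically `1` if and only if `p ≡ 0 (mod y)`. -/
theorem omegaP_trivial_on_cyclic_iff (m : ℕ) (hm : 1 ≤ m) (p : ℤ) (d f : ℕ)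
    (hd : d ∣ 2 * m + 1) (hf : f ∣ (2 * m + 1) / d) (y : ℕ) (hy : y = (2 * m + 1) / (d * f)) :
    (∀ a ∈ Subgroup.zpowers (DihedralGroup.r ((d * f : ℕ) : ZMod (2 * m + 1))),
     ∀ b ∈ Subgroup.zpowers (DihedralGroup.r ((d * f : ℕ) : ZMod (2 * m + 1))),
     ∀ c ∈ Subgroup.zpowers (DihedralGroup.r ((d * f : ℕ) : ZMod (2 * m + 1))),
        omegaP m p a b c = 1) ↔ (y : ℤ) ∣ p := by
  have hnpos : 0 < 2 * m + 1 := by omega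
  have hdfn : d * f ∣ 2 * m + 1 := (Nat.dvd_div_iff_mul_dvd hd).mp hf
  have hdf0 : 0 < d * f := Nat.pos_of_dvd_of_pos hdfn hnpos
  have hyn : d * f * y = 2 * m + 1 := by rw [hy]; exact Nat.mul_div_cancel' hdfn
  have hy0 : 0 < y := by
    by_contra hcon
    have hz : y = 0 := by omega
    rw [hz, Nat.mul_zero] at hyn
    omega
  have hyodd : y % 2 = 1 := by
    rcases Nat.even_or_odd y with he | ho
    · exfalso
      have h2 : 2 ∣ 2*m+1 := by
        rw [← hyn]; exact Dvd.dvd.mul_left he.two_dvd _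
      omega
    · exact Nat.odd_iff.mp ho
  have hndvd : (((2*m+1 : ℕ)) : ℂ) ≠ 0 := by
    exact Nat.cast_ne_zero.mpr (by omega)
  constructor
  · intro h
    by_cases hy1 : y = 1
    · rw [hy1]; exact one_dvd p
    · -- y = 2j+1 with j ≥ 1
      obtain ⟨j, hj, hj1⟩ : ∃ j : ℕ, y = 2*j+1 ∧ 1 ≤ j := ⟨y/2, by omega, by omega⟩
      -- bounds
      have hb1 : d*f*3 ≤ 2*m+1 := by
        calc d*f*3 ≤ d*f*y := Nat.mul_le_mul_left _ (by omega)
        _ = 2*m+1 := hyn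
      -- the three group elements
      have hmemA : DihedralGroup.r ((d * f : ℕ) : ZMod (2 * m + 1)) ∈
          Subgroup.zpowers (DihedralGroup.r ((d * f : ℕ) : ZMod (2 * m + 1))) :=
        Subgroup.mem_zpowers _
      have hmemB : DihedralGroup.r ((d * f * j : ℕ) : ZMod (2 * m + 1)) ∈
          Subgroup.zpowers (DihedralGroup.r ((d * f : ℕ) : ZMod (2 * m + 1))) := by
        refine ⟨(j : ℤ), ?_⟩
        show (DihedralGroup.r ((d * f : ℕ) : ZMod (2 * m + 1)))^(j:ℤ) = _
        rw [r_zpow]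
        congr 1
        push_cast
        ring
      have h1 := h _ hmemA _ hmemB _ hmemB
      rw [omegaP_r, exp_aux _ hndvd] at h1
      -- compute valMinAbs values
      have hA : (((d * f : ℕ) : ZMod (2*m+1))).valMinAbs = ((d*f : ℕ) : ℤ) := by
        rw [ZMod.valMinAbs_spec]
        refine ⟨by push_cast; ring, ?_, ?_⟩
        · have : (0:ℤ) < ((2*m+1 : ℕ) : ℤ) := by exact_mod_cast hnpos
          have h2 : (0:ℤ) ≤ ((d*f : ℕ) : ℤ) := Int.natCast_nonneg _
          linarith
        · have : ((d*f*2 : ℕ) : ℤ) ≤ ((2*m+1 : ℕ) : ℤ) := by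
            exact_mod_cast le_trans (by omega) hb1
          push_cast at this ⊢
          linarith
      have hB : (((d * f * j : ℕ) : ZMod (2*m+1))).valMinAbs = ((d*f*j : ℕ) : ℤ) := by
        rw [ZMod.valMinAbs_spec]
        refine ⟨by push_cast; ring, ?_, ?_⟩
        · have : (0:ℤ) < ((2*m+1 : ℕ) : ℤ) := by exact_mod_cast hnpos
          have h2 : (0:ℤ) ≤ ((d*f*j : ℕ) : ℤ) := Int.natCast_nonneg _
          linarith
        · have hnat : d*f*j*2 ≤ 2*m+1 := by
            have : d*f*(2*j) ≤ d*f*y := Nat.mul_le_mul_left _ (by omega)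
            calc d*f*j*2 = d*f*(2*j) := by ring
            _ ≤ d*f*y := this
            _ = 2*m+1 := hyn
          exact_mod_cast hnat
      rw [hA, hB] at h1
      have hbr : brkt (2*m+1) (((d*f*j : ℕ) : ℤ) + ((d*f*j : ℕ) : ℤ)) = -((d*f : ℕ) : ℤ) := by
        unfold brkt
        rw [ZMod.valMinAbs_spec]
        have hkeyN : d*f*j + d*f*j + d*f = 2*m+1 := by
          have : d*f*(2*j+1) = 2*m+1 := by rw [← hj]; exact hyn
          calc d*f*j + d*f*j + d*f = d*f*(2*j+1) := by ring
          _ = 2*m+1 := this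
        have hkey : ((d*f*j : ℕ) : ℤ) + ((d*f*j : ℕ) : ℤ) + ((d*f : ℕ) : ℤ)
            = ((2*m+1 : ℕ) : ℤ) := by exact_mod_cast hkeyN
        refine ⟨?_, ?_, ?_⟩
        · have : ((d*f*j : ℕ) : ℤ) + ((d*f*j : ℕ) : ℤ)
              = ((2*m+1 : ℕ) : ℤ) - ((d*f : ℕ) : ℤ) := by linarith
          rw [this]
          push_cast
          have hz := ZMod.natCast_self (2*m+1)
          push_cast at hz
          linear_combination hz
        · have h2df : ((d*f*2 : ℕ) : ℤ) < ((2*m+1 : ℕ) : ℤ) := by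
            exact_mod_cast lt_of_lt_of_le (by omega) hb1
          push_cast at h2df ⊢
          linarith
        · have h2 : (0:ℤ) ≤ ((d*f : ℕ) : ℤ) := Int.natCast_nonneg _
          have : (0:ℤ) ≤ ((2*m+1 : ℕ) : ℤ) := Int.natCast_nonneg _
          linarith
      rw [hbr] at h1
      -- now h1 : (2m+1)^2 ∣ p * (df * (dfj + dfj - (-df))) with dfj+dfj+df = n
      obtain ⟨k, hk⟩ := h1
      refine ⟨k, ?_⟩
      have hE : ((d*f*j : ℕ) : ℤ) + ((d*f*j : ℕ) : ℤ) - (-((d*f : ℕ) : ℤ))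
          = ((2*m+1 : ℕ) : ℤ) := by
        have hkeyN : d*f*j + d*f*j + d*f = 2*m+1 := by
          have : d*f*(2*j+1) = 2*m+1 := by rw [← hj]; exact hyn
          calc d*f*j + d*f*j + d*f = d*f*(2*j+1) := by ring
          _ = 2*m+1 := this
        have : ((d*f*j : ℕ) : ℤ) + ((d*f*j : ℕ) : ℤ) + ((d*f : ℕ) : ℤ)
            = ((2*m+1 : ℕ) : ℤ) := by exact_mod_cast hkeyN
        linarith
      rw [hE] at hk
      -- hk : p * (df * n) = n^2 * k ; conclude p = y * k
      have hn0 : ((2*m+1 : ℕ) : ℤ) ≠ 0 := by exact_mod_cast (by omega : 2*m+1 ≠ 0)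
      have hdf0' : ((d*f : ℕ) : ℤ) ≠ 0 := Int.natCast_ne_zero.mpr (by omega)
      have hyn' : ((d*f : ℕ) : ℤ) * (y : ℤ) = ((2*m+1 : ℕ) : ℤ) := by exact_mod_cast hyn
      have step1 : p * ((d*f : ℕ) : ℤ) = ((2*m+1 : ℕ) : ℤ) * k := by
        apply mul_right_cancel₀ hn0
        calc p * ((d*f : ℕ) : ℤ) * ((2*m+1 : ℕ) : ℤ)
            = p * (((d*f : ℕ) : ℤ) * ((2*m+1 : ℕ) : ℤ)) := by ring
        _ = ((2*m+1 : ℕ) : ℤ)^2 * k := hk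
        _ = ((2*m+1 : ℕ) : ℤ) * k * ((2*m+1 : ℕ) : ℤ) := by ring
      apply mul_right_cancel₀ hdf0'
      calc p * ((d*f : ℕ) : ℤ) = ((2*m+1 : ℕ) : ℤ) * k := step1
      _ = ((d*f : ℕ) : ℤ) * (y : ℤ) * k := by rw [hyn']
      _ = (y : ℤ) * k * ((d*f : ℕ) : ℤ) := by ring
  · rintro ⟨q, hq⟩ a ha b hb c hc
    obtain ⟨ka, hka⟩ := Subgroup.mem_zpowers_iff.mp ha
    obtain ⟨kb, hkb⟩ := Subgroup.mem_zpowers_iff.mp hb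
    obtain ⟨kc, hkc⟩ := Subgroup.mem_zpowers_iff.mp hc
    rw [r_zpow] at hka hkb hkc
    subst hka hkb hkc
    rw [omegaP_r, exp_aux _ hndvd]
    set ia := ((ka : ZMod (2*m+1)) * ((d*f : ℕ) : ZMod (2*m+1))) with hia
    set ib := ((kb : ZMod (2*m+1)) * ((d*f : ℕ) : ZMod (2*m+1))) with hib
    set ic := ((kc : ZMod (2*m+1)) * ((d*f : ℕ) : ZMod (2*m+1))) with hic
    -- df divides A
    obtain ⟨a', ha'⟩ : ((d*f : ℕ) : ℤ) ∣ ia.valMinAbs := by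
      have hc0 : ((ia.valMinAbs - ka * ((d*f : ℕ) : ℤ) : ℤ) : ZMod (2*m+1)) = 0 := by
        push_cast
        rw [hia]
        push_cast
        ring
      obtain ⟨t, ht⟩ := (ZMod.intCast_zmod_eq_zero_iff_dvd _ _).mp hc0
      obtain ⟨u, hu⟩ : ((d*f : ℕ) : ℤ) ∣ ((2*m+1 : ℕ) : ℤ) := by exact_mod_cast hdfn
      exact ⟨ka + u*t, by rw [mul_add, ← mul_assoc, ← hu]; linarith [ht]⟩
    -- n divides E
    obtain ⟨e', he'⟩ : (((2*m+1 : ℕ)) : ℤ) ∣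
        (ib.valMinAbs + ic.valMinAbs - brkt (2*m+1) (ib.valMinAbs + ic.valMinAbs)) := by
      rw [← ZMod.intCast_zmod_eq_zero_iff_dvd]
      unfold brkt
      push_cast
      ring
    have hyn' : ((d*f : ℕ) : ℤ) * (y : ℤ) = ((2*m+1 : ℕ) : ℤ) := by exact_mod_cast hyn
    refine ⟨q * a' * e', ?_⟩
    rw [hq, ha', he']
    rw [← hyn']
    ring
end
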